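/- arXiv:2307.02428 — 2 statements merged into one kernel-verified Lean document; each statement's English description precedes it below -/
import Mathlib

section
/- (Probabilistic core of Theorem on convergence in the sample size J.) Let A ∈ ℤ^{N×M}, u ∈ ℤ^N, let B ∈ ℤ^{M×K} be a lattice basis matrix for A, and let x, x_t ∈ F_A(u). Let q be the product-Skellam probability mass function on ℤ^K with rate vectors λ⁺, λ⁻ ∈ (0,∞)^K, and set p = Σ_{y ∈ ℤ^K : By = x − x_t} q(y). For each J ∈ ℕ, the probability under the J-fold product of q (i.e., for J i.i.d. draws Y_1, …, Y_J from q) that x ≠ x_t + B Y_j for all j ∈ {1,…,J} equals (1 − p)^J, and this probability tends to 0 as J → ∞. -/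
open scoped Classical

/-- The Skellam probability mass function at `z ∈ ℤ`: the law of the difference of two
independent Poisson random variables with rates `lp` and `lm`. -/
noncomputable def skellamPMF (lp lm : ℝ) (z : ℤ) : ℝ :=
  ∑' ab : ℕ × ℕ,
    if (ab.1 : ℤ) - (ab.2 : ℤ) = z then
      (Real.exp (-lp) * lp ^ ab.1 / (Nat.factorial ab.1)) *
        (Real.exp (-lm) * lm ^ ab.2 / (Nat.factorial ab.2))
    else 0

/-- The product-Skellam probability mass function on `ℤ^K` with rate vectors `lp, lm`. -/
noncomputable def productSkellamPMF {K : ℕ} (lp lm : Fin K → ℝ) (y : Fin K → ℤ) : ℝ :=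
  ∏ k, skellamPMF (lp k) (lm k) (y k)

/- ### Auxiliary definitions and lemmas -/

/-- The Poisson pmf with rate `l`. -/
noncomputable def poisPMF (l : ℝ) (n : ℕ) : ℝ := Real.exp (-l) * l ^ n / n.factorial

lemma poisPMF_pos {l : ℝ} (hl : 0 < l) (n : ℕ) : 0 < poisPMF l n := by
  unfold poisPMF
  positivity

lemma poisPMF_nonneg {l : ℝ} (hl : 0 ≤ l) (n : ℕ) : 0 ≤ poisPMF l n := by
  unfold poisPMF
  positivity

lemma hasSum_poisPMF (l : ℝ) : HasSum (poisPMF l) 1 := by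
  have h := (NormedSpace.expSeries_div_hasSum_exp l).mul_left (Real.exp (-l))
  have hexp : NormedSpace.exp l = Real.exp l := by rw [Real.exp_eq_exp_ℝ]
  rw [hexp, ← Real.exp_add, neg_add_cancel, Real.exp_zero] at h
  convert h using 2 with n
  · rfl
  unfold poisPMF
  ring

/-- The joint pmf of two independent Poissons. -/
noncomputable def poisProd (lp lm : ℝ) (ab : ℕ × ℕ) : ℝ := poisPMF lp ab.1 * poisPMF lm ab.2

lemma poisProd_pos {lp lm : ℝ} (hlp : 0 < lp) (hlm : 0 < lm) (ab : ℕ × ℕ) :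
    0 < poisProd lp lm ab := mul_pos (poisPMF_pos hlp _) (poisPMF_pos hlm _)

lemma summable_poisProd {lp lm : ℝ} (hlp : 0 < lp) (hlm : 0 < lm) :
    Summable (poisProd lp lm) :=
  Summable.mul_of_nonneg (hasSum_poisPMF lp).summable (hasSum_poisPMF lm).summable
    (fun n => (poisPMF_pos hlp n).le) (fun n => (poisPMF_pos hlm n).le)

lemma hasSum_poisProd {lp lm : ℝ} (hlp : 0 < lp) (hlm : 0 < lm) :
    HasSum (poisProd lp lm) 1 := by
  have h := (hasSum_poisPMF lp).mul (hasSum_poisPMF lm) (summable_poisProd hlp hlm)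
  simp at h; exact h

lemma skellamPMF_eq_tsum_ite (lp lm : ℝ) (z : ℤ) :
    skellamPMF lp lm z
      = ∑' ab : ℕ × ℕ, if (ab.1 : ℤ) - (ab.2 : ℤ) = z then poisProd lp lm ab else 0 := rfl

lemma skellamPMF_eq_fiber (lp lm : ℝ) (z : ℤ) :
    skellamPMF lp lm z
      = ∑' ab : ((fun ab : ℕ × ℕ => (ab.1 : ℤ) - (ab.2 : ℤ)) ⁻¹' {z}), poisProd lp lm ab.1 := by
  rw [skellamPMF_eq_tsum_ite, tsum_subtype]
  refine tsum_congr fun ab => ?_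
  simp [Set.indicator_apply]

lemma hasSum_skellamPMF {lp lm : ℝ} (hlp : 0 < lp) (hlm : 0 < lm) :
    HasSum (skellamPMF lp lm) 1 := by
  have h := (hasSum_poisProd hlp hlm).tsum_fiberwise
    (fun ab : ℕ × ℕ => (ab.1 : ℤ) - (ab.2 : ℤ))
  have h2 : skellamPMF lp lm
      = fun z => ∑' ab : ((fun ab : ℕ × ℕ => (ab.1 : ℤ) - (ab.2 : ℤ)) ⁻¹' {z}),
          poisProd lp lm ab.1 :=
    funext fun z => skellamPMF_eq_fiber lp lm z
  rw [h2]
  exact h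

lemma skellamPMF_nonneg {lp lm : ℝ} (hlp : 0 ≤ lp) (hlm : 0 ≤ lm) (z : ℤ) :
    0 ≤ skellamPMF lp lm z := by
  rw [skellamPMF_eq_tsum_ite]
  refine tsum_nonneg fun ab => ?_
  split_ifs
  · exact mul_nonneg (poisPMF_nonneg hlp _) (poisPMF_nonneg hlm _)
  · exact le_rfl

lemma skellamPMF_pos {lp lm : ℝ} (hlp : 0 < lp) (hlm : 0 < lm) (z : ℤ) :
    0 < skellamPMF lp lm z := by
  obtain ⟨a, b, hab⟩ : ∃ a b : ℕ, (a : ℤ) - (b : ℤ) = z :=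
    ⟨z.toNat, (-z).toNat, by omega⟩
  have hnonneg : ∀ ab : ℕ × ℕ,
      0 ≤ (if (ab.1 : ℤ) - (ab.2 : ℤ) = z then poisProd lp lm ab else 0) := by
    intro ab
    split_ifs
    · exact (poisProd_pos hlp hlm ab).le
    · exact le_rfl
  have hsum : Summable (fun ab : ℕ × ℕ =>
      if (ab.1 : ℤ) - (ab.2 : ℤ) = z then poisProd lp lm ab else 0) := by
    refine Summable.of_nonneg_of_le hnonneg (fun ab => ?_) (summable_poisProd hlp hlm)
    split_ifs
    · exact le_rfl
    · exact (poisProd_pos hlp hlm ab).le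
  have hle := Summable.le_tsum hsum (a, b) (fun ab _ => hnonneg ab)
  rw [skellamPMF_eq_tsum_ite]
  calc (0 : ℝ) < poisProd lp lm (a, b) := poisProd_pos hlp hlm _
    _ = (if ((a : ℤ) - (b : ℤ) = z) then poisProd lp lm (a, b) else 0) := (if_pos hab).symm
    _ ≤ _ := hle

/-- Sums of products over finite pi types factor. -/
lemma hasSum_pi_prod {α : Type*} (n : ℕ) : ∀ (q : Fin n → α → ℝ) (s : Fin n → ℝ),
    (∀ i, HasSum (q i) (s i)) → (∀ i a, 0 ≤ q i a) →
    HasSum (fun f : Fin n → α => ∏ i, q i (f i)) (∏ i, s i) := by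
  induction n with
  | zero =>
    intro q s _ _
    have h1 : (fun f : Fin 0 → α => ∏ i, q i (f i)) = fun _ => (1 : ℝ) := by
      funext f; simp
    have h2 : (∏ i, s i) = 1 := by simp
    rw [h1, h2]
    exact hasSum_unique _
  | succ n IH =>
    intro q s hq hq0
    have ih : HasSum (fun f : Fin n → α => ∏ i : Fin n, q i.succ (f i))
        (∏ i : Fin n, s i.succ) :=
      IH (fun i => q i.succ) (fun i => s i.succ)
        (fun i => hq i.succ) (fun i a => hq0 i.succ a)
    have hmul : HasSum (fun p : α × (Fin n → α) => q 0 p.1 * ∏ i : Fin n, q i.succ (p.2 i))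
        (s 0 * ∏ i : Fin n, s i.succ) := by
      have hsum : Summable
          (fun p : α × (Fin n → α) => q 0 p.1 * ∏ i : Fin n, q i.succ (p.2 i)) :=
        Summable.mul_of_nonneg (f := q 0)
          (g := fun f : Fin n → α => ∏ i : Fin n, q i.succ (f i))
          (hq 0).summable ih.summable
          (fun a => hq0 0 a) (fun f => Finset.prod_nonneg fun i _ => hq0 _ _)
      exact HasSum.mul (f := q 0) (g := fun f : Fin n → α => ∏ i : Fin n, q i.succ (f i))
        (hq 0) ih hsum
    have h := (Fin.consEquiv fun _ : Fin (n + 1) => α).symm.hasSum_iff.mpr hmul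
    have hfe : (fun p : α × (Fin n → α) => q 0 p.1 * ∏ i : Fin n, q i.succ (p.2 i))
        ∘ ⇑(Fin.consEquiv fun _ : Fin (n + 1) => α).symm = fun f : Fin (n + 1) → α => ∏ i, q i (f i) := by
      funext f
      simp [Function.comp, Fin.consEquiv, Fin.prod_univ_succ, Fin.tail]
    rw [hfe] at h
    rw [Fin.prod_univ_succ s]
    exact h

/-- probabilistic core of convergence in the sample size `J`.
With `p` the product-Skellam probability of proposing `x` from `x_t`, the probability
(under `J` i.i.d. product-Skellam draws `Y_1, …, Y_J`) that `x ≠ x_t + B Y_j` for all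
`j` equals `(1 - p)^J`, and this probability tends to `0` as `J → ∞`. -/
theorem miss_probability_eq_and_tendsto_zero
    (N M K : ℕ) (hN : 1 ≤ N) (hM : 1 ≤ M) (hK : 1 ≤ K)
    (A : Matrix (Fin N) (Fin M) ℤ) (u : Fin N → ℤ)
    (B : Matrix (Fin M) (Fin K) ℤ)
    (hBker : ∀ k : Fin K, A.mulVec (fun m => B m k) = 0)
    (hBspan : ∀ v : Fin M → ℤ, A.mulVec v = 0 → ∃ y : Fin K → ℤ, v = B.mulVec y)
    (x xt : Fin M → ℤ)
    (hx : A.mulVec x = u ∧ ∀ m, 0 ≤ x m)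
    (hxt : A.mulVec xt = u ∧ ∀ m, 0 ≤ xt m)
    (lp lm : Fin K → ℝ) (hlp : ∀ k, 0 < lp k) (hlm : ∀ k, 0 < lm k)
    (p : ℝ)
    (hp : p = ∑' y : {y : Fin K → ℤ // B.mulVec y = x - xt}, productSkellamPMF lp lm y.1) :
    (∀ J : ℕ,
        (∑' Ys : Fin J → (Fin K → ℤ),
            if ∀ j : Fin J, x ≠ xt + B.mulVec (Ys j) then
              ∏ j : Fin J, productSkellamPMF lp lm (Ys j)
            else 0) = (1 - p) ^ J) ∧
      Filter.Tendsto
        (fun J : ℕ =>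
          ∑' Ys : Fin J → (Fin K → ℤ),
            if ∀ j : Fin J, x ≠ xt + B.mulVec (Ys j) then
              ∏ j : Fin J, productSkellamPMF lp lm (Ys j)
            else 0)
        Filter.atTop (nhds 0) := by
  have hQ0 : ∀ y, 0 ≤ productSkellamPMF lp lm y := fun y =>
    Finset.prod_nonneg fun k _ => skellamPMF_nonneg (hlp k).le (hlm k).le _
  have hQpos : ∀ y, 0 < productSkellamPMF lp lm y := fun y =>
    Finset.prod_pos fun k _ => skellamPMF_pos (hlp k) (hlm k) _
  have hQ1 : HasSum (productSkellamPMF lp lm) 1 := by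
    have h := hasSum_pi_prod K (fun k => skellamPMF (lp k) (lm k)) (fun _ => (1 : ℝ))
      (fun k => hasSum_skellamPMF (hlp k) (hlm k))
      (fun k z => skellamPMF_nonneg (hlp k).le (hlm k).le z)
    simp at h; exact h
  -- the hit indicator
  set g : (Fin K → ℤ) → ℝ :=
    fun y => if B.mulVec y = x - xt then productSkellamPMF lp lm y else 0 with hg_def
  have hg0 : ∀ y, 0 ≤ g y := by
    intro y; simp only [hg_def]; split_ifs
    · exact hQ0 y
    · exact le_rfl
  have hgleQ : ∀ y, g y ≤ productSkellamPMF lp lm y := by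
    intro y; simp only [hg_def]; split_ifs
    · exact le_rfl
    · exact hQ0 y
  have hgsum : Summable g := Summable.of_nonneg_of_le hg0 hgleQ hQ1.summable
  have hpg : p = ∑' y, g y := by
    have h1 : p = ∑' y : {y : Fin K → ℤ | B.mulVec y = x - xt},
        productSkellamPMF lp lm y.1 := hp
    rw [h1, tsum_subtype]
    refine tsum_congr fun y => ?_
    simp [Set.indicator_apply, hg_def]
  -- bounds on p
  have hp_pos : 0 < p := by
    have hker : A.mulVec (x - xt) = 0 := by
      rw [Matrix.mulVec_sub, hx.1, hxt.1, sub_self]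
    obtain ⟨y, hy⟩ := hBspan _ hker
    have hgy : g y = productSkellamPMF lp lm y := by simp only [hg_def]; exact if_pos hy.symm
    have hle := Summable.le_tsum hgsum y (fun y' _ => hg0 y')
    rw [hpg]
    calc (0 : ℝ) < productSkellamPMF lp lm y := hQpos y
      _ = g y := hgy.symm
      _ ≤ _ := hle
  have hp_le : p ≤ 1 := by
    rw [hpg, ← hQ1.tsum_eq]
    exact Summable.tsum_le_tsum hgleQ hgsum hQ1.summable
  -- the miss indicator
  set h : (Fin K → ℤ) → ℝ :=
    fun y => if x ≠ xt + B.mulVec y then productSkellamPMF lp lm y else 0 with hh_def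
  have hcond : ∀ y : Fin K → ℤ, (B.mulVec y = x - xt) ↔ (x = xt + B.mulVec y) := by
    intro y
    constructor
    · intro hy; rw [hy]; abel
    · intro hy; rw [hy]; abel
  have hgh : ∀ y, h y = productSkellamPMF lp lm y - g y := by
    intro y
    simp only [hh_def, hg_def]
    by_cases hc : B.mulVec y = x - xt
    · rw [if_pos hc, if_neg, sub_self]
      exact not_not_intro ((hcond y).mp hc)
    · rw [if_neg hc, if_pos, sub_zero]
      exact fun hxx => hc ((hcond y).mpr hxx)
  have hh0 : ∀ y, 0 ≤ h y := by
    intro y; simp only [hh_def]; split_ifs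
    · exact hQ0 y
    · exact le_rfl
  have hhs : HasSum h (1 - p) := by
    have := hQ1.sub hgsum.hasSum
    rw [← hpg] at this
    have hfe : (fun y => productSkellamPMF lp lm y - g y) = h := funext fun y => (hgh y).symm
    rwa [hfe] at this
  -- the J-fold identity
  have key : ∀ J : ℕ,
      (∑' Ys : Fin J → (Fin K → ℤ),
          if ∀ j : Fin J, x ≠ xt + B.mulVec (Ys j) then
            ∏ j : Fin J, productSkellamPMF lp lm (Ys j)
          else 0) = (1 - p) ^ J := by
    intro J
    have hJ : HasSum (fun Ys : Fin J → (Fin K → ℤ) => ∏ j, h (Ys j)) ((1 - p) ^ J) := by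
      have hh := hasSum_pi_prod J (fun _ => h) (fun _ => (1 - p))
        (fun _ => hhs) (fun _ y => hh0 y)
      simpa using hh
    have hsummand : ∀ Ys : Fin J → (Fin K → ℤ),
        (if ∀ j : Fin J, x ≠ xt + B.mulVec (Ys j) then
            ∏ j : Fin J, productSkellamPMF lp lm (Ys j)
          else 0) = ∏ j, h (Ys j) := by
      intro Ys
      by_cases hall : ∀ j : Fin J, x ≠ xt + B.mulVec (Ys j)
      · rw [if_pos hall]
        refine Finset.prod_congr rfl fun j _ => ?_
        simp only [hh_def]
        exact (if_pos (hall j)).symm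
      · rw [if_neg hall]
        push_neg at hall
        obtain ⟨j, hj⟩ := hall
        refine (Finset.prod_eq_zero (Finset.mem_univ j) ?_).symm
        simp only [hh_def]
        exact if_neg (not_not_intro hj)
    calc (∑' Ys : Fin J → (Fin K → ℤ),
          if ∀ j : Fin J, x ≠ xt + B.mulVec (Ys j) then
            ∏ j : Fin J, productSkellamPMF lp lm (Ys j)
          else 0)
        = ∑' Ys : Fin J → (Fin K → ℤ), ∏ j, h (Ys j) := tsum_congr hsummand
      _ = (1 - p) ^ J := hJ.tsum_eq
  refine ⟨key, ?_⟩
  have htend : Filter.Tendsto (fun J : ℕ => (1 - p) ^ J) Filter.atTop (nhds 0) :=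
    tendsto_pow_atTop_nhds_zero_of_lt_one (by linarith) (by linarith)
  exact htend.congr (fun J => (key J).symm)
end

section
/- Let k ≥ 1 and let x ∈ ℤ^{4k+2} satisfy x ≥ 0 componentwise and A_k x = e_{2k+1}. Then exactly one of the following holds: (i) (x_{4k+1}, x_{4k+2}) = (1,0), x_i + x_{k+i} = 1 for every i ∈ {1,…,k} (so (x_1,…,x_k) and (x_{k+1},…,x_{2k}) are binary complements in {0,1}^k), and x_j = 0 for all 2k+1 ≤ j ≤ 4k; or (ii) (x_{4k+1}, x_{4k+2}) = (0,1), x_{2k+i} + x_{3k+i} = 1 for every i ∈ {1,…,k} (so (x_{2k+1},…,x_{3k}) and (x_{3k+1},…,x_{4k}) are binary complements in {0,1}^k), and x_j = 0 for all 1 ≤ j ≤ 2k. -/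
/-- The linear map `x ↦ A_k x` for the Hemmecke–Windisch matrix
`A_k = [I_k, I_k, 0, 0, -1_k, 0; 0, 0, I_k, I_k, 0, -1_k; 0, 0, 0, 0, 1, 1]`,
given row-wise (0-based indexing): for `r < k`, row `r` is `x_r + x_{k+r} - x_{4k}`;
for `k ≤ r < 2k`, row `r` is `x_{k+r} + x_{2k+r} - x_{4k+1}`
(that is, `x_{2k+i} + x_{3k+i} - x_{4k+1}` with `i = r - k`);
and the last row (`r = 2k`) is `x_{4k} + x_{4k+1}`. -/
def AkMulVec (k : ℕ) (x : Fin (4 * k + 2) → ℤ) : Fin (2 * k + 1) → ℤ := fun r =>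
  if h : (r : ℕ) < k then
    x ⟨(r : ℕ), by omega⟩ + x ⟨k + (r : ℕ), by omega⟩ - x ⟨4 * k, by omega⟩
  else if h2 : (r : ℕ) < 2 * k then
    x ⟨k + (r : ℕ), by omega⟩ + x ⟨2 * k + (r : ℕ), by omega⟩ - x ⟨4 * k + 1, by omega⟩
  else
    x ⟨4 * k, by omega⟩ + x ⟨4 * k + 1, by omega⟩

/-- The last standard basis vector `e_{2k+1} ∈ ℤ^{2k+1}` (0-based index `2k`). -/
def lastStdBasis (k : ℕ) : Fin (2 * k + 1) → ℤ := fun r => if (r : ℕ) = 2 * k then 1 else 0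


/-- If `x ∈ ℤ^{4k+2}` is componentwise nonnegative and `A_k x = e_{2k+1}`,
then exactly one of the following two alternatives holds (1-based indexing as in the paper):
(i) `(x_{4k+1}, x_{4k+2}) = (1,0)`, `x_i + x_{k+i} = 1` for all `i ∈ {1,…,k}` (so
`(x_1,…,x_k)` and `(x_{k+1},…,x_{2k})` are binary complements in `{0,1}^k`), and `x_j = 0`
for `2k+1 ≤ j ≤ 4k`; or (ii) `(x_{4k+1}, x_{4k+2}) = (0,1)`, `x_{2k+i} + x_{3k+i} = 1`
for all `i ∈ {1,…,k}` (binary complements), and `x_j = 0` for `1 ≤ j ≤ 2k`. -/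
theorem fiber_is_two_binary_segments
    (k : ℕ) (hk : 1 ≤ k) (x : Fin (4 * k + 2) → ℤ)
    (hnonneg : ∀ j, 0 ≤ x j)
    (hAx : AkMulVec k x = lastStdBasis k) :
    Xor'
      (x ⟨4 * k, by omega⟩ = 1 ∧ x ⟨4 * k + 1, by omega⟩ = 0 ∧
        (∀ i : Fin k,
          x ⟨(i : ℕ), by have := i.isLt; omega⟩ + x ⟨k + (i : ℕ), by have := i.isLt; omega⟩ = 1 ∧
          (x ⟨(i : ℕ), by have := i.isLt; omega⟩ = 0 ∨ x ⟨(i : ℕ), by have := i.isLt; omega⟩ = 1)) ∧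
        (∀ j : Fin (4 * k + 2), 2 * k ≤ (j : ℕ) → (j : ℕ) < 4 * k → x j = 0))
      (x ⟨4 * k, by omega⟩ = 0 ∧ x ⟨4 * k + 1, by omega⟩ = 1 ∧
        (∀ i : Fin k,
          x ⟨2 * k + (i : ℕ), by have := i.isLt; omega⟩ +
            x ⟨3 * k + (i : ℕ), by have := i.isLt; omega⟩ = 1 ∧
          (x ⟨2 * k + (i : ℕ), by have := i.isLt; omega⟩ = 0 ∨
            x ⟨2 * k + (i : ℕ), by have := i.isLt; omega⟩ = 1)) ∧
        (∀ j : Fin (4 * k + 2), (j : ℕ) < 2 * k → x j = 0)) := by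
  have hxe : ∀ (a b : ℕ) (ha : a < 4*k+2) (hb : b < 4*k+2), a = b → x ⟨a, ha⟩ = x ⟨b, hb⟩ := by
    intro a b ha hb h; subst h; rfl
  have hlast : x ⟨4*k, by omega⟩ + x ⟨4*k+1, by omega⟩ = 1 := by
    have h := congrFun hAx ⟨2*k, by omega⟩
    simp only [AkMulVec, lastStdBasis, Fin.val_mk] at h
    simp only [if_true] at h
    split at h
    · omega
    · split at h
      · omega
      · exact h
  have row1 : ∀ i : Fin k,
      x ⟨(i:ℕ), by have := i.isLt; omega⟩ + x ⟨k + (i:ℕ), by have := i.isLt; omega⟩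
        = x ⟨4*k, by omega⟩ := by
    intro i
    have hi := i.isLt
    have h := congrFun hAx ⟨(i:ℕ), by omega⟩
    simp only [AkMulVec, lastStdBasis, Fin.val_mk] at h
    rw [if_neg (by omega)] at h
    split at h
    · linarith
    · omega
  have row2 : ∀ i : Fin k,
      x ⟨2*k + (i:ℕ), by have := i.isLt; omega⟩ + x ⟨3*k + (i:ℕ), by have := i.isLt; omega⟩
        = x ⟨4*k+1, by omega⟩ := by
    intro i
    have hi := i.isLt
    have h := congrFun hAx ⟨k + (i:ℕ), by omega⟩
    simp only [AkMulVec, lastStdBasis, Fin.val_mk,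
      show k + (k + (i:ℕ)) = 2*k + (i:ℕ) by omega,
      show 2*k + (k + (i:ℕ)) = 3*k + (i:ℕ) by omega] at h
    rw [if_neg (by omega)] at h
    split at h
    · omega
    · split at h
      · linarith
      · omega
  have ha := hnonneg ⟨4*k, by omega⟩
  have hb := hnonneg ⟨4*k+1, by omega⟩
  rcases (by omega : x ⟨4*k, by omega⟩ = 1 ∧ x ⟨4*k+1, by omega⟩ = 0 ∨
      x ⟨4*k, by omega⟩ = 0 ∧ x ⟨4*k+1, by omega⟩ = 1) with ⟨h1, h2⟩ | ⟨h1, h2⟩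
  · left
    refine ⟨⟨h1, h2, ?_, ?_⟩, ?_⟩
    · intro i
      have hr := row1 i
      have n1 := hnonneg ⟨(i:ℕ), by have := i.isLt; omega⟩
      have n2 := hnonneg ⟨k + (i:ℕ), by have := i.isLt; omega⟩
      exact ⟨by omega, by omega⟩
    · intro j hj1 hj2
      by_cases hc : (j:ℕ) < 3*k
      · have hr := row2 ⟨(j:ℕ) - 2*k, by omega⟩
        simp only [Fin.val_mk] at hr
        have n1 := hnonneg ⟨2*k + ((j:ℕ)-2*k), by omega⟩
        have n2 := hnonneg ⟨3*k + ((j:ℕ)-2*k), by omega⟩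
        have hje : x j = x ⟨2*k + ((j:ℕ)-2*k), by omega⟩ := by
          apply hxe; omega
        omega
      · have hr := row2 ⟨(j:ℕ) - 3*k, by omega⟩
        simp only [Fin.val_mk] at hr
        have n1 := hnonneg ⟨2*k + ((j:ℕ)-3*k), by omega⟩
        have n2 := hnonneg ⟨3*k + ((j:ℕ)-3*k), by omega⟩
        have hje : x j = x ⟨3*k + ((j:ℕ)-3*k), by omega⟩ := by
          apply hxe; omega
        omega
    · rintro ⟨h1', _⟩; omega
  · right
    refine ⟨⟨h1, h2, ?_, ?_⟩, ?_⟩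
    · intro i
      have hr := row2 i
      have n1 := hnonneg ⟨2*k + (i:ℕ), by have := i.isLt; omega⟩
      have n2 := hnonneg ⟨3*k + (i:ℕ), by have := i.isLt; omega⟩
      exact ⟨by omega, by omega⟩
    · intro j hj
      by_cases hc : (j:ℕ) < k
      · have hr := row1 ⟨(j:ℕ), by omega⟩
        simp only [Fin.val_mk] at hr
        have n1 := hnonneg ⟨(j:ℕ), by omega⟩
        have n2 := hnonneg ⟨k + (j:ℕ), by omega⟩
        have hje : x j = x ⟨(j:ℕ), by omega⟩ := by apply hxe; rfl
        omega
      · have hr := row1 ⟨(j:ℕ) - k, by omega⟩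
        simp only [Fin.val_mk] at hr
        have n1 := hnonneg ⟨(j:ℕ)-k, by omega⟩
        have n2 := hnonneg ⟨k + ((j:ℕ)-k), by omega⟩
        have hje : x j = x ⟨k + ((j:ℕ)-k), by omega⟩ := by apply hxe; omega
        omega
    · rintro ⟨h1', _⟩; omega
end
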